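/- For every n ≥ 0, the sum over all integer partitions μ of the squares (f̃^μ_n)² of the numbers of oscillating tableaux of shape μ and length n equals (2n−1)!! = (2n−1)(2n−3)⋯3·1 (with the convention (−1)!! = 1). (Only partitions μ of n−2r for 0 ≤ r ≤ ⌊n/2⌋ contribute.) -/

import Mathlib

open scoped BigOperators
open Function

/-- A function `ℕ → ℕ` represents an integer partition if it is weakly decreasing and
eventually zero (the value at `i` is the length of row `i` of the Young diagram). -/
def IsPartFun (f : ℕ → ℕ) : Prop :=
  (∀ i j : ℕ, i ≤ j → f j ≤ f i) ∧ ∃ N, ∀ i, N ≤ i → f i = 0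

/-- The Young diagram of `g` is obtained from that of `f` by adding exactly one square. -/
def AddBox (f g : ℕ → ℕ) : Prop :=
  ∃ i, g = Function.update f i (f i + 1)

/-- `T` is an oscillating tableau of length `n`: a sequence `∅ = μ⁰, μ¹, …, μⁿ` of
partitions in which consecutive diagrams differ by adding or removing one square. -/
def IsOscTab (n : ℕ) (T : Fin (n + 1) → ℕ → ℕ) : Prop :=
  (∀ k, IsPartFun (T k)) ∧ T 0 = (fun _ => 0) ∧
    ∀ k : Fin n, AddBox (T k.castSucc) (T k.succ) ∨ AddBox (T k.succ) (T k.castSucc)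

/-! ### Basics -/

def P0 : ℕ → ℕ := fun _ => 0

def Step (f g : ℕ → ℕ) : Prop := AddBox f g ∨ AddBox g f

lemma partP0 : IsPartFun P0 := ⟨fun _ _ _ => le_refl 0, 0, fun _ _ => rfl⟩

lemma Step.symm {f g : ℕ → ℕ} (h : Step f g) : Step g f := h.elim Or.inr Or.inl

lemma addBox_asymm {f g : ℕ → ℕ} (h : AddBox f g) (h' : AddBox g f) : False := by
  obtain ⟨i, rfl⟩ := h
  obtain ⟨j, hj⟩ := h'
  by_cases hij : j = i
  · subst hij
    have := congrFun hj j
    simp [Function.update_self] at this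
    omega
  · have := congrFun hj j
    rw [Function.update_self, Function.update_of_ne hij] at this
    omega

lemma addBox_P0_false {f : ℕ → ℕ} (h : AddBox f P0) : False := by
  obtain ⟨i, hi⟩ := h
  have := congrFun hi.symm i
  simp [Function.update_self, P0] at this

/-- Adding a box in row 0 preserves partitions. -/
lemma part_add0 {f : ℕ → ℕ} (hf : IsPartFun f) : IsPartFun (update f 0 (f 0 + 1)) := by
  obtain ⟨hm, N, hN⟩ := hf
  refine ⟨fun i j hij => ?_, max N 1, fun i hi => ?_⟩
  · rcases Nat.eq_zero_or_pos j with rfl | hj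
    · interval_cases i; simp
    · rw [Function.update_of_ne (by omega)]
      rcases Nat.eq_zero_or_pos i with rfl | hi
      · rw [Function.update_self]; exact (hm 0 j (by omega)).trans (by omega)
      · rw [Function.update_of_ne (by omega)]; exact hm i j hij
  · rw [Function.update_of_ne (by omega)]; exact hN i (by omega)

/-- Adding a box in row `i+1` preserves partitions iff `f (i+1) < f i`. -/
lemma part_add_succ {f : ℕ → ℕ} (hf : IsPartFun f) {i : ℕ} (h : f (i + 1) < f i) :
    IsPartFun (update f (i + 1) (f (i + 1) + 1)) := by
  obtain ⟨hm, N, hN⟩ := hf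
  refine ⟨fun a b hab => ?_, max N (i + 2), fun a ha => ?_⟩
  · rcases eq_or_ne b (i + 1) with rfl | hb
    · rw [Function.update_self]
      rcases eq_or_ne a (i + 1) with rfl | ha
      · simp
      · rw [Function.update_of_ne ha]
        exact (Nat.succ_le_of_lt h).trans (hm a i (by omega))
    · rw [Function.update_of_ne hb]
      rcases eq_or_ne a (i + 1) with rfl | ha
      · rw [Function.update_self]
        exact (hm (i + 1) b hab).trans (by omega)
      · rw [Function.update_of_ne ha]; exact hm a b hab
  · rw [Function.update_of_ne (by omega)]; exact hN a (by omega)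

lemma part_add_succ_iff {f : ℕ → ℕ} (hf : IsPartFun f) {i : ℕ} :
    IsPartFun (update f (i + 1) (f (i + 1) + 1)) ↔ f (i + 1) < f i := by
  refine ⟨fun h => ?_, part_add_succ hf⟩
  have := h.1 i (i + 1) (by omega)
  rw [Function.update_self, Function.update_of_ne (by omega)] at this
  omega

/-- Removing a box in row `i` preserves partitions when `f (i+1) < f i`. -/
lemma part_sub {f : ℕ → ℕ} (hf : IsPartFun f) {i : ℕ} (h : f (i + 1) < f i) :
    IsPartFun (update f i (f i - 1)) := by
  obtain ⟨hm, N, hN⟩ := hf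
  refine ⟨fun a b hab => ?_, max N (i + 1), fun a ha => ?_⟩
  · by_cases hb : b = i
    · subst hb
      rw [Function.update_self]
      by_cases ha : a = b
      · subst ha; simp
      · rw [Function.update_of_ne ha]
        exact (Nat.sub_le _ _).trans (hm a b hab)
    · rw [Function.update_of_ne hb]
      by_cases ha : a = i
      · subst ha
        rw [Function.update_self]
        have h1 : f b ≤ f (a + 1) := hm (a + 1) b (by omega)
        omega
      · rw [Function.update_of_ne ha]; exact hm a b hab
  · rw [Function.update_of_ne (by omega)]; exact hN a (by omega)
/-! ### Covers: adding/removing boxes -/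

lemma addBox_eval {l ν : ℕ → ℕ} {j : ℕ} (h : ν = update l j (l j + 1)) (k : ℕ) :
    ν k = if k = j then l j + 1 else l k := by
  subst h; simp [Function.update_apply]

lemma sub_addBox {f : ℕ → ℕ} {i : ℕ} (h : 1 ≤ f i) : AddBox (update f i (f i - 1)) f := by
  refine ⟨i, funext fun k => ?_⟩
  by_cases hk : k = i
  · subst hk; simp [Function.update_apply]; omega
  · simp [Function.update_apply, hk]

/-- Rows where a box can be added to `f`, as an equiv with covers of `f`. -/
noncomputable def addRowsEquiv (f : ℕ → ℕ) :
    {i : ℕ // IsPartFun (update f i (f i + 1))} ≃ {ν // IsPartFun ν ∧ AddBox f ν} := by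
  refine Equiv.ofBijective
    (fun i => ⟨update f i.1 (f i.1 + 1), i.2, ⟨i.1, rfl⟩⟩) ⟨?_, ?_⟩
  · rintro ⟨i, hi⟩ ⟨j, hj⟩ h
    simp only [Subtype.mk.injEq] at h ⊢
    by_contra hij
    have := congrFun h i
    rw [Function.update_self, Function.update_of_ne hij] at this
    omega
  · rintro ⟨ν, hp, i, hi⟩
    exact ⟨⟨i, hi ▸ hp⟩, by simp [hi]⟩

/-- Rows where a box can be removed from a partition `f`, as an equiv with co-covers. -/
noncomputable def subRowsEquiv {f : ℕ → ℕ} (hf : IsPartFun f) :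
    {i : ℕ // f (i + 1) < f i} ≃ {ν // IsPartFun ν ∧ AddBox ν f} := by
  refine Equiv.ofBijective
    (fun i => ⟨update f i.1 (f i.1 - 1), part_sub hf i.2, sub_addBox (by omega)⟩) ⟨?_, ?_⟩
  · rintro ⟨i, hi⟩ ⟨j, hj⟩ h
    simp only [Subtype.mk.injEq] at h ⊢
    by_contra hij
    have := congrFun h i
    rw [Function.update_self, Function.update_of_ne hij] at this
    omega
  · rintro ⟨ν, hp, i, hi⟩
    have hev := addBox_eval hi
    have hνf : ν = update f i (f i - 1) := by
      funext k
      have := hev k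
      by_cases hk : k = i
      · subst hk; rw [Function.update_self]; simp at this; omega
      · rw [Function.update_of_ne hk]; simp [hk] at this; omega
    have hlt : f (i + 1) < f i := by
      have h1 := hev (i + 1)
      have h2 := hev i
      simp at h2
      have h3 : ν (i + 1) ≤ ν i := hp.1 i (i + 1) (by omega)
      by_cases hii : i + 1 = i
      · omega
      · simp [hii] at h1; omega
    exact ⟨⟨i, hlt⟩, by simp [hνf.symm]⟩

def succRowsEquiv {A R : ℕ → Prop} (h0 : A 0) (hs : ∀ i, A (i + 1) ↔ R i) :
    {i // A i} ≃ {i // R i} ⊕ Unit where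
  toFun x := match x with
    | ⟨0, _⟩ => Sum.inr PUnit.unit
    | ⟨i + 1, h⟩ => Sum.inl ⟨i, (hs i).1 h⟩
  invFun x := match x with
    | Sum.inr _ => ⟨0, h0⟩
    | Sum.inl ⟨i, h⟩ => ⟨i + 1, (hs i).2 h⟩
  left_inv x := by rcases x with ⟨(_ | i), h⟩ <;> rfl
  right_inv x := by rcases x with (⟨i, h⟩ | ⟨⟩) <;> rfl

/-- The differential-poset identity on the diagonal: covers ≃ co-covers ⊕ 1. -/
lemma diag_equiv {f : ℕ → ℕ} (hf : IsPartFun f) :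
    Nonempty ({ν // IsPartFun ν ∧ AddBox f ν} ≃ ({ν // IsPartFun ν ∧ AddBox ν f} ⊕ Unit)) := by
  refine ⟨((addRowsEquiv f).symm.trans
    (succRowsEquiv (part_add0 hf) (fun i => part_add_succ_iff hf))).trans
    (Equiv.sumCongr (subRowsEquiv hf) (Equiv.refl Unit))⟩
/-! ### Off-diagonal differential identity -/

section OffDiag

variable {l r ν : ℕ → ℕ}

lemma upup_rows_ne {i j : ℕ} (hne : l ≠ r)
    (hj : ν = update l j (l j + 1)) (hi : ν = update r i (r i + 1)) : i ≠ j := by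
  rintro rfl
  apply hne
  funext k
  have a := addBox_eval hj k
  have b := addBox_eval hi k
  by_cases hk : k = i
  · subst hk; simp at a b; omega
  · simp [hk] at a b; omega

lemma upup_val (hne : l ≠ r) (h1 : AddBox l ν) (h2 : AddBox r ν) :
    ν = fun k => max (l k) (r k) := by
  obtain ⟨j, hj⟩ := h1
  obtain ⟨i, hi⟩ := h2
  have hij := upup_rows_ne hne hj hi
  have evj := addBox_eval hj
  have evi := addBox_eval hi
  funext k
  show ν k = max (l k) (r k)
  have a := evj k
  have b := evi k
  by_cases hkj : k = j <;> by_cases hki : k = i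
  · exact absurd (hki.symm.trans hkj) hij
  · subst hkj; rw [if_pos rfl] at a; rw [if_neg hki] at b
    rw [max_eq_right (show l k ≤ r k by omega)]; omega
  · subst hki; rw [if_neg hkj] at a; rw [if_pos rfl] at b
    rw [max_eq_left (show r k ≤ l k by omega)]; omega
  · rw [if_neg hkj] at a; rw [if_neg hki] at b
    rw [max_eq_left (show r k ≤ l k by omega)]; omega

lemma dndn_rows_ne {i j : ℕ} (hne : l ≠ r)
    (hj : l = update ν j (ν j + 1)) (hi : r = update ν i (ν i + 1)) : i ≠ j := by
  rintro rfl; exact hne (hj.trans hi.symm)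

lemma dndn_val (hne : l ≠ r) (h1 : AddBox ν l) (h2 : AddBox ν r) :
    ν = fun k => min (l k) (r k) := by
  obtain ⟨j, hj⟩ := h1
  obtain ⟨i, hi⟩ := h2
  have hij := dndn_rows_ne hne hj hi
  have evj := addBox_eval hj
  have evi := addBox_eval hi
  funext k
  show ν k = min (l k) (r k)
  have a := evj k
  have b := evi k
  by_cases hkj : k = j <;> by_cases hki : k = i
  · exact absurd (hki.symm.trans hkj) hij
  · subst hkj; rw [if_pos rfl] at a; rw [if_neg hki] at b
    rw [min_eq_right (show r k ≤ l k by omega)]; omega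
  · subst hki; rw [if_neg hkj] at a; rw [if_pos rfl] at b
    rw [min_eq_left (show l k ≤ r k by omega)]; omega
  · rw [if_neg hkj] at a; rw [if_neg hki] at b
    rw [min_eq_left (show l k ≤ r k by omega)]; omega

lemma upup_subsingleton (hne : l ≠ r) :
    Subsingleton {ν // IsPartFun ν ∧ AddBox l ν ∧ AddBox r ν} :=
  ⟨fun a b => Subtype.ext ((upup_val hne a.2.2.1 a.2.2.2).trans
    (upup_val hne b.2.2.1 b.2.2.2).symm)⟩

lemma dndn_subsingleton (hne : l ≠ r) :
    Subsingleton {ν // IsPartFun ν ∧ AddBox ν l ∧ AddBox ν r} :=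
  ⟨fun a b => Subtype.ext ((dndn_val hne a.2.2.1 a.2.2.2).trans
    (dndn_val hne b.2.2.1 b.2.2.2).symm)⟩

lemma upup_to_dndn (hl : IsPartFun l) (hr : IsPartFun r) (hne : l ≠ r)
    (h1 : AddBox l ν) (h2 : AddBox r ν) :
    ∃ μ, IsPartFun μ ∧ AddBox μ l ∧ AddBox μ r := by
  obtain ⟨j, hj⟩ := h1
  obtain ⟨i, hi⟩ := h2
  have hij := upup_rows_ne hne hj hi
  have evj := addBox_eval hj
  have evi := addBox_eval hi
  have key : l i = r i + 1 := by
    have a := evj i; rw [if_neg hij] at a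
    have b := evi i; rw [if_pos rfl] at b
    omega
  have key2 : r j = l j + 1 := by
    have a := evj j; rw [if_pos rfl] at a
    have b := evi j; rw [if_neg (Ne.symm hij)] at b
    omega
  have keyk : ∀ k, k ≠ i → k ≠ j → l k = r k := by
    intro k hki hkj
    have a := evj k; rw [if_neg hkj] at a
    have b := evi k; rw [if_neg hki] at b
    omega
  have hlt : l (i + 1) < l i := by
    have hrm : r (i + 1) ≤ r i := hr.1 i (i + 1) (by omega)
    by_cases hji : i + 1 = j
    · subst hji; omega
    · have hq : l (i + 1) = r (i + 1) := keyk _ (by omega) hji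
      omega
  refine ⟨update l i (l i - 1), part_sub hl hlt, sub_addBox (by omega), ?_⟩
  refine ⟨j, funext fun k => ?_⟩
  by_cases hkj : k = j
  · subst hkj
    rw [Function.update_self, Function.update_of_ne (Ne.symm hij)]
    omega
  · rw [Function.update_of_ne hkj]
    by_cases hki : k = i
    · subst hki; rw [Function.update_self]; omega
    · rw [Function.update_of_ne hki]; exact (keyk k hki hkj).symm

lemma dndn_to_upup (hl : IsPartFun l) (hr : IsPartFun r) (hne : l ≠ r)
    (hν : IsPartFun ν) (h1 : AddBox ν l) (h2 : AddBox ν r) :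
    ∃ μ, IsPartFun μ ∧ AddBox l μ ∧ AddBox r μ := by
  obtain ⟨j, hj⟩ := h1
  obtain ⟨i, hi⟩ := h2
  have hij := dndn_rows_ne hne hj hi
  have evj := addBox_eval hj
  have evi := addBox_eval hi
  have keyi : l i = ν i ∧ r i = ν i + 1 := by
    have a := evj i; rw [if_neg hij] at a
    have b := evi i; rw [if_pos rfl] at b
    omega
  have keyj : l j = ν j + 1 ∧ r j = ν j := by
    have a := evj j; rw [if_pos rfl] at a
    have b := evi j; rw [if_neg (Ne.symm hij)] at b
    omega
  have keyk : ∀ k, k ≠ i → k ≠ j → l k = ν k ∧ r k = ν k := by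
    intro k hki hkj
    have a := evj k; rw [if_neg hkj] at a
    have b := evi k; rw [if_neg hki] at b
    omega
  have hpart : IsPartFun (update l i (l i + 1)) := by
    rcases i with _ | i'
    · exact part_add0 hl
    · refine part_add_succ hl ?_
      have hrm : r (i' + 1) ≤ r i' := hr.1 i' (i' + 1) (by omega)
      by_cases hji : i' = j
      · subst hji; omega
      · have hq := keyk i' (by omega) hji
        omega
  refine ⟨update l i (l i + 1), hpart, ⟨i, rfl⟩, ⟨j, funext fun k => ?_⟩⟩
  by_cases hkj : k = j
  · subst hkj
    rw [Function.update_self, Function.update_of_ne (Ne.symm hij)]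
    omega
  · rw [Function.update_of_ne hkj]
    by_cases hki : k = i
    · subst hki
      rw [Function.update_self]
      omega
    · rw [Function.update_of_ne hki]
      exact ((keyk k hki hkj).1.trans (keyk k hki hkj).2.symm)

lemma offdiag_equiv (hl : IsPartFun l) (hr : IsPartFun r) (hne : l ≠ r) :
    Nonempty ({ν // IsPartFun ν ∧ AddBox l ν ∧ AddBox r ν} ≃
      {ν // IsPartFun ν ∧ AddBox ν l ∧ AddBox ν r}) := by
  haveI := upup_subsingleton (l := l) (r := r) hne
  haveI := dndn_subsingleton (l := l) (r := r) hne
  refine ⟨equivOfSubsingletonOfSubsingleton ?_ ?_⟩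
  · rintro ⟨ν, hp, h1, h2⟩
    have h := upup_to_dndn hl hr hne h1 h2
    exact ⟨h.choose, h.choose_spec⟩
  · rintro ⟨ν, hp, h1, h2⟩
    have h := dndn_to_upup hl hr hne hp h1 h2
    exact ⟨h.choose, h.choose_spec⟩

/-- The full differential-poset identity. -/
lemma diff_equiv (hl : IsPartFun l) (hr : IsPartFun r) :
    Nonempty ({ν // IsPartFun ν ∧ AddBox l ν ∧ AddBox r ν} ≃
      ({ν // IsPartFun ν ∧ AddBox ν l ∧ AddBox ν r} ⊕ PLift (r = l))) := by
  by_cases hne : r = l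
  · subst hne
    obtain ⟨e⟩ := diag_equiv hl
    haveI : Subsingleton (PLift (r = r)) := ⟨fun a b => by cases a; cases b; rfl⟩
    refine ⟨(Equiv.subtypeEquivRight (fun ν => by tauto)).trans (e.trans
      (Equiv.sumCongr (Equiv.subtypeEquivRight (fun ν => by tauto))
        (equivOfSubsingletonOfSubsingleton (fun _ => ⟨rfl⟩) (fun _ => Unit.unit))))⟩
  · obtain ⟨e⟩ := offdiag_equiv hl hr (Ne.symm hne)
    haveI : IsEmpty (PLift (r = l)) := ⟨fun h => hne h.down⟩
    exact ⟨e.trans (Equiv.sumEmpty _ _).symm⟩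

end OffDiag
/-! ### Walks on Young's lattice -/

inductive Walk : ℕ → (ℕ → ℕ) → (ℕ → ℕ) → Type where
  | nil (a : ℕ → ℕ) (h : IsPartFun a) : Walk 0 a a
  | cons {m : ℕ} {a b c : ℕ → ℕ} (w : Walk m a b) (h : IsPartFun c) (s : Step b c) :
      Walk (m + 1) a c

lemma Walk.part_right : ∀ {m : ℕ} {a b : ℕ → ℕ}, Walk m a b → IsPartFun b
  | _, _, _, .nil _ h => h
  | _, _, _, .cons _ h _ => h

lemma Walk.zero_eq {a b : ℕ → ℕ} (w : Walk 0 a b) : a = b := by cases w; rfl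

instance walk_zero_subsingleton (a b : ℕ → ℕ) : Subsingleton (Walk 0 a b) :=
  ⟨fun w w' => by cases w; cases w'; rfl⟩

instance walk_one_subsingleton (a b : ℕ → ℕ) : Subsingleton (Walk 1 a b) :=
  ⟨fun w w' => by
    cases w with | cons w0 h s =>
    cases w0 with | nil _ _ =>
    cases w' with | cons w0' h' s' =>
    cases w0' with | nil _ _ => rfl⟩

def consEquiv (m : ℕ) (a c : ℕ → ℕ) :
    Walk (m + 1) a c ≃ Σ b : {b : ℕ → ℕ // IsPartFun c ∧ Step b c}, Walk m a b.1 where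
  toFun w := match w with
    | .cons (b := b) w h s => ⟨⟨b, h, s⟩, w⟩
  invFun x := Walk.cons x.2 x.1.2.1 x.1.2.2
  left_inv w := by cases w; rfl
  right_inv x := rfl

def walkZeroEquiv {a : ℕ → ℕ} (h : IsPartFun a) (b : ℕ → ℕ) :
    Walk 0 a b ≃ PLift (a = b) where
  toFun w := ⟨w.zero_eq⟩
  invFun e := e.down ▸ Walk.nil a h
  left_inv w := Subsingleton.elim _ _
  right_inv e := Subsingleton.elim _ _

/-! ### Equiv toolkit -/

section Toolkit
universe u v
variable {α β γ : Type u}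

def sigmaSubtypeCongr {p q : α → Prop} (F : α → Type v) (h : ∀ a, F a → (p a ↔ q a)) :
    (Σ a : Subtype p, F a.1) ≃ (Σ a : Subtype q, F a.1) where
  toFun x := ⟨⟨x.1.1, (h x.1.1 x.2).1 x.1.2⟩, x.2⟩
  invFun x := ⟨⟨x.1.1, (h x.1.1 x.2).2 x.1.2⟩, x.2⟩
  left_inv x := rfl
  right_inv x := rfl

noncomputable def sigmaOrEquiv {p q : α → Prop} (F : α → Type v)
    (hd : ∀ a, p a → q a → False) :
    (Σ a : {a // p a ∨ q a}, F a.1) ≃ (Σ a : Subtype p, F a.1) ⊕ (Σ a : Subtype q, F a.1) where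
  toFun x := @dite _ (p x.1.1) (Classical.dec _) (fun h => .inl ⟨⟨x.1.1, h⟩, x.2⟩)
    (fun h => .inr ⟨⟨x.1.1, x.1.2.resolve_left h⟩, x.2⟩)
  invFun x := match x with
    | .inl y => ⟨⟨y.1.1, .inl y.1.2⟩, y.2⟩
    | .inr y => ⟨⟨y.1.1, .inr y.1.2⟩, y.2⟩
  left_inv x := by
    rcases x with ⟨⟨a, ha⟩, y⟩
    dsimp only
    by_cases h : p a
    · rw [dif_pos h]
    · rw [dif_neg h]
  right_inv x := by
    rcases x with ⟨⟨a, ha⟩, y⟩ | ⟨⟨a, ha⟩, y⟩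
    · dsimp only; rw [dif_pos ha]
    · dsimp only; rw [dif_neg (fun h => hd a h ha)]

def sigmaSwapEquiv {p : α → Prop} {q : α → β → Prop} (F : β → Type v) :
    (Σ a : Subtype p, Σ b : {b // q a.1 b}, F b.1) ≃ (Σ b : β, F b × {a // p a ∧ q a b}) where
  toFun x := ⟨x.2.1.1, x.2.2, ⟨x.1.1, x.1.2, x.2.1.2⟩⟩
  invFun y := ⟨⟨y.2.2.1, y.2.2.2.1⟩, ⟨y.1, y.2.2.2.2⟩, y.2.1⟩
  left_inv x := rfl
  right_inv y := rfl

def sigmaSubtypeEquivOfForall {p : α → Prop} (F : α → Type v) (h : ∀ a, F a → p a) :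
    (Σ a : α, F a) ≃ (Σ a : Subtype p, F a.1) where
  toFun x := ⟨⟨x.1, h x.1 x.2⟩, x.2⟩
  invFun x := ⟨x.1.1, x.2⟩
  left_inv x := rfl
  right_inv x := rfl

def prodSubtypeCongr {p q : γ → Prop} (F : Type v) (h : F → ∀ x, (p x ↔ q x)) :
    F × {x // p x} ≃ F × {x // q x} where
  toFun x := (x.1, ⟨x.2.1, (h x.1 _).1 x.2.2⟩)
  invFun x := (x.1, ⟨x.2.1, (h x.1 _).2 x.2.2⟩)
  left_inv x := rfl
  right_inv x := rfl

def sigmaPliftCollapse {p : α → Prop} (F : α → Type v) (a0 : α) (h0 : p a0) :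
    (Σ a : Subtype p, F a.1 × PLift (a.1 = a0)) ≃ F a0 where
  toFun x := x.2.2.down ▸ x.2.1
  invFun y := ⟨⟨a0, h0⟩, y, ⟨rfl⟩⟩
  left_inv x := by
    rcases x with ⟨⟨a, ha⟩, y, ⟨he⟩⟩
    cases he
    rfl
  right_inv y := rfl

def sigmaProdConst {C : Type v} (F : α → Type v) :
    (Σ a : α, C × F a) ≃ C × Σ a : α, F a where
  toFun x := (x.2.1, ⟨x.1, x.2.2⟩)
  invFun y := ⟨y.2.1, y.1, y.2.2⟩
  left_inv x := rfl
  right_inv y := rfl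

def punitEquivFinOne : PUnit.{1} ≃ Fin 1 :=
  equivOfSubsingletonOfSubsingleton (fun _ => 0) (fun _ => PUnit.unit)

end Toolkit

/-! ### The operator identity `D (U+D)^m = (U+D)^m D + m (U+D)^(m-1)` -/

@[reducible] def Dty (m : ℕ) (f : ℕ → ℕ) : Type :=
  Σ ν : {ν : ℕ → ℕ // IsPartFun ν ∧ AddBox f ν}, Walk m P0 ν.1

@[reducible] def Uty (m : ℕ) (f : ℕ → ℕ) : Type :=
  Σ ν : {ν : ℕ → ℕ // IsPartFun ν ∧ AddBox ν f}, Walk m P0 ν.1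

lemma walk_succ_equiv (m : ℕ) {f : ℕ → ℕ} (hf : IsPartFun f) :
    Nonempty (Walk (m + 1) P0 f ≃ (Uty m f ⊕ Dty m f)) := by
  refine ⟨(consEquiv m P0 f).trans ((sigmaSubtypeCongr (fun b => Walk m P0 b) ?_).trans
    (sigmaOrEquiv (fun b => Walk m P0 b) ?_))⟩
  · intro b w
    constructor
    · rintro ⟨-, h | h⟩
      · exact Or.inl ⟨w.part_right, h⟩
      · exact Or.inr ⟨w.part_right, h⟩
    · rintro (⟨hb, h⟩ | ⟨hb, h⟩)
      · exact ⟨hf, Or.inl h⟩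
      · exact ⟨hf, Or.inr h⟩
  · rintro b ⟨-, h⟩ ⟨-, h'⟩
    exact addBox_asymm h h'

def e0 : ℕ → ℕ := update P0 0 1

lemma part_e0 : IsPartFun e0 := part_add0 partP0

lemma addBox_P0_e0 : AddBox P0 e0 := ⟨0, rfl⟩

lemma addBox_P0_eq {ν : ℕ → ℕ} (hν : IsPartFun ν) (h : AddBox P0 ν) : ν = e0 := by
  obtain ⟨i, hi⟩ := h
  have ev := addBox_eval hi
  rcases i with _ | i'
  · funext k
    have := ev k
    by_cases hk : k = 0
    · subst hk; simpa [e0, P0] using this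
    · rw [if_neg hk] at this; simpa [e0, P0, Function.update_apply, hk] using this
  · exfalso
    have h1 := ev (i' + 1); rw [if_pos rfl] at h1
    have h2 := ev i'; rw [if_neg (by omega)] at h2
    have := hν.1 i' (i' + 1) (by omega)
    simp [P0] at h1 h2
    omega

lemma cov_e0_eq {f : ℕ → ℕ} (h : AddBox f e0) : f = P0 := by
  obtain ⟨i, hi⟩ := h
  have ev := addBox_eval hi
  rcases i with _ | i'
  · funext k
    have := ev k
    by_cases hk : k = 0
    · subst hk; rw [if_pos rfl] at this; simp [e0, P0] at this ⊢; omega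
    · rw [if_neg hk] at this; simp [e0, P0, Function.update_apply, hk] at this ⊢; omega
  · exfalso
    have h1 := ev (i' + 1); rw [if_pos rfl] at h1
    simp [e0, Function.update_apply, P0] at h1
/-! ### Base case of the key lemma -/

lemma walk_one_e0 {ν : ℕ → ℕ} (hν : IsPartFun ν) (w : Walk 1 P0 ν) : ν = e0 := by
  cases w with | cons w0 h s =>
  have h0 := w0.zero_eq
  rcases s with hs | hs
  · rw [← h0] at hs; exact addBox_P0_eq hν hs
  · rw [← h0] at hs; exact absurd hs addBox_P0_false

lemma dty_one_f_eq {f : ℕ → ℕ} (x : Dty 1 f) : f = P0 := by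
  obtain ⟨⟨ν, hν, hc⟩, w⟩ := x
  have hν0 : ν = e0 := walk_one_e0 hν w
  exact cov_e0_eq (hν0 ▸ hc)

lemma dty_one_subsingleton (f : ℕ → ℕ) : Subsingleton (Dty 1 f) := by
  constructor
  rintro ⟨⟨ν, hν, hc⟩, w⟩ ⟨⟨ν', hν', hc'⟩, w'⟩
  obtain rfl : ν = ν' := (walk_one_e0 hν w).trans (walk_one_e0 hν' w').symm
  exact Sigma.ext rfl (heq_of_eq (Subsingleton.elim w w'))

lemma KL0 {f : ℕ → ℕ} (hf : IsPartFun f) :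
    Nonempty (Dty 1 f ≃ Fin 1 × Walk 0 P0 f) := by
  haveI := dty_one_subsingleton f
  haveI : Subsingleton (Fin 1 × Walk 0 P0 f) :=
    ⟨fun a b => Prod.ext (Subsingleton.elim _ _) (Subsingleton.elim _ _)⟩
  refine ⟨equivOfSubsingletonOfSubsingleton ?_ ?_⟩
  · intro x
    have hfp : f = P0 := dty_one_f_eq x
    subst hfp
    exact (0, Walk.nil P0 partP0)
  · rintro ⟨k, w⟩
    have hfp : P0 = f := w.zero_eq
    subst hfp
    exact ⟨⟨e0, part_e0, addBox_P0_e0⟩,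
      Walk.cons (Walk.nil P0 partP0) part_e0 (Or.inl addBox_P0_e0)⟩

/-! ### The key lemma: `D (U+D)^(m+1) δ∅ = (m+1) (U+D)^m δ∅` -/

lemma KL : ∀ (m : ℕ) {f : ℕ → ℕ}, IsPartFun f →
    Nonempty (Dty (m + 1) f ≃ Fin (m + 1) × Walk m P0 f) := by
  intro m
  induction m with
  | zero => exact fun hf => KL0 hf
  | succ m IH =>
    intro f hf
    -- step 1 : peel the last step of the walk in each fibre
    have e1 : Dty (m + 2) f ≃
        Σ ν : {ν : ℕ → ℕ // IsPartFun ν ∧ AddBox f ν}, (Uty (m + 1) ν.1 ⊕ Dty (m + 1) ν.1) :=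
      Equiv.sigmaCongrRight fun ν => Classical.choice (walk_succ_equiv (m + 1) ν.2.1)
    have e2 := Equiv.sigmaSumDistrib
      (fun ν : {ν : ℕ → ℕ // IsPartFun ν ∧ AddBox f ν} => Uty (m + 1) ν.1)
      (fun ν => Dty (m + 1) ν.1)
    -- term B : walks whose last two steps are up, down
    have eB : (Σ ν : {ν : ℕ → ℕ // IsPartFun ν ∧ AddBox f ν}, Dty (m + 1) ν.1) ≃
        Fin (m + 1) × Dty m f :=
      (Equiv.sigmaCongrRight fun ν => Classical.choice (IH ν.2.1)).trans
        (sigmaProdConst (fun ν : {ν : ℕ → ℕ // IsPartFun ν ∧ AddBox f ν} =>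
          Walk m P0 ν.1))
    -- term A : walks whose last two steps are ?, up
    have a1 : (Σ ν : {ν : ℕ → ℕ // IsPartFun ν ∧ AddBox f ν}, Uty (m + 1) ν.1) ≃
        Σ ρ : ℕ → ℕ, Walk (m + 1) P0 ρ ×
          {ν // (IsPartFun ν ∧ AddBox f ν) ∧ (IsPartFun ρ ∧ AddBox ρ ν)} :=
      sigmaSwapEquiv (p := fun ν => IsPartFun ν ∧ AddBox f ν)
        (q := fun ν ρ => IsPartFun ρ ∧ AddBox ρ ν) (fun ρ => Walk (m + 1) P0 ρ)
    have a2 : (Σ ρ : ℕ → ℕ, Walk (m + 1) P0 ρ ×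
          {ν // (IsPartFun ν ∧ AddBox f ν) ∧ (IsPartFun ρ ∧ AddBox ρ ν)}) ≃
        Σ ρ : {ρ : ℕ → ℕ // IsPartFun ρ}, Walk (m + 1) P0 ρ.1 ×
          {ν // (IsPartFun ν ∧ AddBox f ν) ∧ (IsPartFun ρ.1 ∧ AddBox ρ.1 ν)} :=
      sigmaSubtypeEquivOfForall _ (fun ρ x => x.1.part_right)
    have a3 : (Σ ρ : {ρ : ℕ → ℕ // IsPartFun ρ}, Walk (m + 1) P0 ρ.1 ×
          {ν // (IsPartFun ν ∧ AddBox f ν) ∧ (IsPartFun ρ.1 ∧ AddBox ρ.1 ν)}) ≃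
        Σ ρ : {ρ : ℕ → ℕ // IsPartFun ρ}, Walk (m + 1) P0 ρ.1 ×
          ({ν // IsPartFun ν ∧ AddBox ν f ∧ AddBox ν ρ.1} ⊕ PLift (ρ.1 = f)) :=
      Equiv.sigmaCongrRight fun ρ =>
        (prodSubtypeCongr (p := fun ν => (IsPartFun ν ∧ AddBox f ν) ∧ (IsPartFun ρ.1 ∧ AddBox ρ.1 ν))
          (q := fun ν => IsPartFun ν ∧ AddBox f ν ∧ AddBox ρ.1 ν)
          (Walk (m + 1) P0 ρ.1) (fun _ ν => by have := ρ.2; tauto)).trans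
          (Equiv.prodCongr (Equiv.refl _) (Classical.choice (diff_equiv hf ρ.2)))
    have a4 : (Σ ρ : {ρ : ℕ → ℕ // IsPartFun ρ}, Walk (m + 1) P0 ρ.1 ×
          ({ν // IsPartFun ν ∧ AddBox ν f ∧ AddBox ν ρ.1} ⊕ PLift (ρ.1 = f))) ≃
        ((Σ ρ : {ρ : ℕ → ℕ // IsPartFun ρ}, Walk (m + 1) P0 ρ.1 ×
            {ν // IsPartFun ν ∧ AddBox ν f ∧ AddBox ν ρ.1}) ⊕
         (Σ ρ : {ρ : ℕ → ℕ // IsPartFun ρ}, Walk (m + 1) P0 ρ.1 × PLift (ρ.1 = f))) :=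
      (Equiv.sigmaCongrRight fun ρ => Equiv.prodSumDistrib _ _ _).trans
        (Equiv.sigmaSumDistrib _ _)
    -- the PLift part collapses to a single walk
    have a5 : (Σ ρ : {ρ : ℕ → ℕ // IsPartFun ρ}, Walk (m + 1) P0 ρ.1 × PLift (ρ.1 = f)) ≃
        Walk (m + 1) P0 f :=
      sigmaPliftCollapse (fun ρ => Walk (m + 1) P0 ρ) f hf
    -- the down-down part unswaps to `Σ ν ⋖ f, Dty (m+1) ν`
    have a6 : (Σ ρ : {ρ : ℕ → ℕ // IsPartFun ρ}, Walk (m + 1) P0 ρ.1 ×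
          {ν // IsPartFun ν ∧ AddBox ν f ∧ AddBox ν ρ.1}) ≃
        Σ ρ : ℕ → ℕ, Walk (m + 1) P0 ρ ×
          {ν // (IsPartFun ν ∧ AddBox ν f) ∧ (IsPartFun ρ ∧ AddBox ν ρ)} :=
      (Equiv.sigmaCongrRight fun ρ : {ρ : ℕ → ℕ // IsPartFun ρ} =>
        prodSubtypeCongr (p := fun ν => IsPartFun ν ∧ AddBox ν f ∧ AddBox ν ρ.1)
          (q := fun ν => (IsPartFun ν ∧ AddBox ν f) ∧ (IsPartFun ρ.1 ∧ AddBox ν ρ.1))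
          (Walk (m + 1) P0 ρ.1) (fun _ ν => by have := ρ.2; tauto)).trans
        (sigmaSubtypeEquivOfForall (p := fun ρ => IsPartFun ρ)
          (fun ρ => Walk (m + 1) P0 ρ ×
            {ν // (IsPartFun ν ∧ AddBox ν f) ∧ (IsPartFun ρ ∧ AddBox ν ρ)})
          (fun ρ x => x.1.part_right)).symm
    have a7 : (Σ ρ : ℕ → ℕ, Walk (m + 1) P0 ρ ×
          {ν // (IsPartFun ν ∧ AddBox ν f) ∧ (IsPartFun ρ ∧ AddBox ν ρ)}) ≃
        Σ ν : {ν : ℕ → ℕ // IsPartFun ν ∧ AddBox ν f}, Dty (m + 1) ν.1 :=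
      (sigmaSwapEquiv (p := fun ν => IsPartFun ν ∧ AddBox ν f)
        (q := fun ν ρ => IsPartFun ρ ∧ AddBox ν ρ) (fun ρ => Walk (m + 1) P0 ρ)).symm
    have a8 : (Σ ν : {ν : ℕ → ℕ // IsPartFun ν ∧ AddBox ν f}, Dty (m + 1) ν.1) ≃
        Fin (m + 1) × Uty m f :=
      (Equiv.sigmaCongrRight fun ν => Classical.choice (IH ν.2.1)).trans
        (sigmaProdConst (fun ν : {ν : ℕ → ℕ // IsPartFun ν ∧ AddBox ν f} =>
          Walk m P0 ν.1))
    -- assemble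
    obtain ⟨ed⟩ := walk_succ_equiv m hf
    refine ⟨(e1.trans e2).trans ?_⟩
    refine (Equiv.sumCongr ((((a1.trans a2).trans a3).trans a4).trans
      (Equiv.sumCongr ((a6.trans a7).trans a8) a5)) eB).trans ?_
    refine ((Equiv.sumAssoc _ _ _).trans ?_)
    refine (Equiv.sumCongr (Equiv.refl _) (Equiv.sumComm _ _)).trans ?_
    refine (Equiv.sumAssoc _ _ _).symm.trans ?_
    refine (Equiv.sumCongr ((Equiv.prodSumDistrib _ _ _).symm.trans
      (Equiv.prodCongr (Equiv.refl _) ed.symm)) (Equiv.refl _)).trans ?_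
    refine (Equiv.sumCongr (Equiv.refl _) (Equiv.punitProd _).symm).trans ?_
    refine (Equiv.sumProdDistrib _ _ _).symm.trans ?_
    exact Equiv.prodCongr ((Equiv.sumCongr (Equiv.refl _) punitEquivFinOne).trans
      finSumFinEquiv) (Equiv.refl _)
/-! ### Counting closed walks -/

lemma closed_rec (n : ℕ) :
    Nat.card (Walk (2 * n + 2) P0 P0) = (2 * n + 1) * Nat.card (Walk (2 * n) P0 P0) := by
  obtain ⟨ed⟩ := walk_succ_equiv (2 * n + 1) partP0
  haveI h1 : IsEmpty {ν : ℕ → ℕ // IsPartFun ν ∧ AddBox ν P0} :=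
    ⟨fun x => addBox_P0_false x.2.2⟩
  haveI h2 : IsEmpty (Uty (2 * n + 1) P0) := ⟨fun x => h1.false x.1⟩
  obtain ⟨ek⟩ := KL (2 * n) partP0
  have := Nat.card_congr (ed.trans ((Equiv.emptySum _ _).trans ek))
  rw [this, Nat.card_prod, Nat.card_eq_fintype_card, Fintype.card_fin]

lemma closed_card (n : ℕ) :
    Nat.card (Walk (2 * n) P0 P0) = Nat.doubleFactorial (2 * n - 1) := by
  induction n with
  | zero =>
    haveI : Unique (PLift (P0 = P0)) := ⟨⟨⟨rfl⟩⟩, fun a => by cases a; rfl⟩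
    rw [Nat.card_congr (walkZeroEquiv partP0 P0), Nat.card_unique]
    rfl
  | succ n ih =>
    have h2 : 2 * (n + 1) = 2 * n + 2 := by ring
    rw [h2, closed_rec n, ih]
    rcases n with _ | k
    · rfl
    · have h4 : 2 * (k + 1) + 2 - 1 = (2 * k + 1) + 2 := by omega
      have h5 : 2 * (k + 1) - 1 = 2 * k + 1 := by omega
      have h6 : 2 * (k + 1) + 1 = 2 * k + 1 + 2 := by omega
      rw [h4, h5, h6, Nat.doubleFactorial_add_two]
/-! ### Bridge between `Fin`-indexed oscillating tableaux and walks -/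

def OscTo (n : ℕ) (μ : ℕ → ℕ) : Type :=
  {T : Fin (n + 1) → ℕ → ℕ // IsOscTab n T ∧ T (Fin.last n) = μ}

def oscSnocEquiv (n : ℕ) (μ : ℕ → ℕ) :
    OscTo (n + 1) μ ≃ Σ b : {b : ℕ → ℕ // IsPartFun μ ∧ Step b μ}, OscTo n b.1 where
  toFun x :=
    ⟨⟨x.1 (Fin.castSucc (Fin.last n)),
      x.2.2 ▸ x.2.1.1 (Fin.last (n + 1)),
      by
        have hs := x.2.1.2.2 (Fin.last n)
        rwa [Fin.succ_last, x.2.2] at hs⟩,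
     ⟨Fin.init x.1,
      ⟨fun k => x.2.1.1 _,
       by
         show x.1 (Fin.castSucc 0) = _
         rw [Fin.castSucc_zero]; exact x.2.1.2.1,
       fun k => by
         have hs := x.2.1.2.2 (Fin.castSucc k)
         show AddBox (x.1 (Fin.castSucc (Fin.castSucc k))) (x.1 (Fin.castSucc k.succ)) ∨
           AddBox (x.1 (Fin.castSucc k.succ)) (x.1 (Fin.castSucc (Fin.castSucc k)))
         rwa [Fin.succ_castSucc] at hs⟩,
      rfl⟩⟩
  invFun y :=
    ⟨Fin.snoc y.2.1 μ,
     ⟨fun k => by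
        refine Fin.lastCases ?_ (fun j => ?_) k
        · rw [Fin.snoc_last]; exact y.1.2.1
        · rw [Fin.snoc_castSucc]; exact y.2.2.1.1 j,
      by
        have h0 : (Fin.snoc y.2.1 μ : ∀ _ : Fin (n + 1 + 1), ℕ → ℕ)
            (Fin.castSucc (0 : Fin (n + 1))) = y.2.1 0 :=
          @Fin.snoc_castSucc (n + 1) (fun _ => ℕ → ℕ) μ y.2.1 0
        rw [Fin.castSucc_zero] at h0
        exact h0.trans y.2.2.1.2.1,
      fun k => by
        refine Fin.lastCases ?_ (fun j => ?_) k
        · rw [Fin.succ_last, Fin.snoc_last, Fin.snoc_castSucc, y.2.2.2]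
          exact y.1.2.2
        · rw [Fin.succ_castSucc, Fin.snoc_castSucc, Fin.snoc_castSucc]
          exact y.2.2.1.2.2 j⟩,
     Fin.snoc_last _ _⟩
  left_inv x := by
    apply Subtype.ext
    have hx := Fin.snoc_init_self x.1
    rw [x.2.2] at hx
    exact hx
  right_inv y := by
    rcases y with ⟨⟨b, hb⟩, T', hT', hlast'⟩
    have h1 : (Fin.snoc T' μ : ∀ _ : Fin (n + 1 + 1), ℕ → ℕ) (Fin.castSucc (Fin.last n)) = b := by
      rw [Fin.snoc_castSucc]; exact hlast'
    obtain rfl : b = (Fin.snoc T' μ : ∀ _ : Fin (n + 1 + 1), ℕ → ℕ) (Fin.castSucc (Fin.last n)) :=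
      h1.symm
    refine Sigma.ext rfl (heq_of_eq (Subtype.ext ?_))
    show Fin.init (Fin.snoc T' μ : ∀ _ : Fin (n + 1 + 1), ℕ → ℕ) = T'
    exact @Fin.init_snoc (n + 1) (fun _ => ℕ → ℕ) μ T'

lemma oscToZeroEquiv (μ : ℕ → ℕ) : Nonempty (OscTo 0 μ ≃ Walk 0 P0 μ) := by
  haveI : Subsingleton (OscTo 0 μ) := by
    constructor
    rintro ⟨T, hT, hl⟩ ⟨T', hT', hl'⟩
    apply Subtype.ext
    show T = T'
    funext k
    rw [Fin.eq_zero k, hT.2.1, hT'.2.1]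
  refine ⟨equivOfSubsingletonOfSubsingleton ?_ ?_⟩
  · rintro ⟨T, hT, hl⟩
    have h : P0 = μ := by
      rw [← hl]
      show P0 = T 0
      rw [hT.2.1]; rfl
    exact h ▸ Walk.nil P0 partP0
  · intro w
    have h : P0 = μ := w.zero_eq
    exact ⟨fun _ => P0, ⟨fun _ => partP0, rfl, fun k => k.elim0⟩, h⟩

lemma oscToEquiv : ∀ (n : ℕ) (μ : ℕ → ℕ), Nonempty (OscTo n μ ≃ Walk n P0 μ) := by
  intro n
  induction n with
  | zero => exact oscToZeroEquiv
  | succ n IH =>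
    intro μ
    refine ⟨(oscSnocEquiv n μ).trans (?_)⟩
    exact (Equiv.sigmaCongrRight fun b : {b : ℕ → ℕ // IsPartFun μ ∧ Step b μ} =>
      Classical.choice (IH b.1)).trans (consEquiv n P0 μ).symm

def pairEquiv (n : ℕ) :
    {PQ : (Fin (n + 1) → ℕ → ℕ) × (Fin (n + 1) → ℕ → ℕ) //
        IsOscTab n PQ.1 ∧ IsOscTab n PQ.2 ∧ PQ.1 (Fin.last n) = PQ.2 (Fin.last n)} ≃
      Σ μ : ℕ → ℕ, OscTo n μ × OscTo n μ where
  toFun x := ⟨x.1.1 (Fin.last n), ⟨x.1.1, x.2.1, rfl⟩, ⟨x.1.2, x.2.2.1, x.2.2.2.symm⟩⟩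
  invFun y := ⟨(y.2.1.1, y.2.2.1), y.2.1.2.1, y.2.2.2.1, y.2.1.2.2.trans y.2.2.2.2.symm⟩
  left_inv x := rfl
  right_inv y := by
    rcases y with ⟨μ, ⟨P, hP, hPl⟩, ⟨Q, hQ, hQl⟩⟩
    subst hPl
    rfl

/-! ### Gluing two walks with the same endpoint into one closed walk -/

def glueSwap (n k : ℕ) :
    (Σ μ : {μ : ℕ → ℕ // IsPartFun μ}, Walk n P0 μ.1 ×
        (Σ ρ : {ρ : ℕ → ℕ // IsPartFun μ.1 ∧ Step ρ μ.1}, Walk k P0 ρ.1)) ≃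
    (Σ ρ : {ρ : ℕ → ℕ // IsPartFun ρ}, (Σ μ : {μ : ℕ → ℕ // IsPartFun ρ.1 ∧ Step μ ρ.1},
        Walk n P0 μ.1) × Walk k P0 ρ.1) where
  toFun x := match x with
    | ⟨⟨μ, hμ⟩, w1, ⟨⟨ρ, hρ⟩, w2⟩⟩ =>
      ⟨⟨ρ, w2.part_right⟩, ⟨⟨μ, w2.part_right, hρ.2.symm⟩, w1⟩, w2⟩
  invFun y := match y with
    | ⟨⟨ρ, hρ⟩, ⟨⟨μ, hμ⟩, w1⟩, w2⟩ =>
      ⟨⟨μ, w1.part_right⟩, w1, ⟨⟨ρ, w1.part_right, hμ.2.symm⟩, w2⟩⟩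
  left_inv x := by rcases x with ⟨⟨μ, hμ⟩, w1, ⟨⟨ρ, hρ⟩, w2⟩⟩; rfl
  right_inv y := by rcases y with ⟨⟨ρ, hρ⟩, ⟨⟨μ, hμ⟩, w1⟩, w2⟩; rfl

def pliftFlip {α : Type} {a b : α} : PLift (a = b) ≃ PLift (b = a) where
  toFun h := ⟨h.down.symm⟩
  invFun h := ⟨h.down.symm⟩
  left_inv h := by cases h; rfl
  right_inv h := by cases h; rfl

def walkCast {m m' : ℕ} {a b : ℕ → ℕ} (h : m = m') : Walk m a b ≃ Walk m' a b := by
  subst h; exact Equiv.refl _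

lemma glue : ∀ (k n : ℕ),
    Nonempty ((Σ μ : {μ : ℕ → ℕ // IsPartFun μ}, Walk n P0 μ.1 × Walk k P0 μ.1) ≃
      Walk (n + k) P0 P0) := by
  intro k
  induction k with
  | zero =>
    intro n
    refine ⟨(Equiv.sigmaCongrRight fun μ : {μ : ℕ → ℕ // IsPartFun μ} =>
      Equiv.prodCongr (Equiv.refl _) ((walkZeroEquiv partP0 μ.1).trans pliftFlip)).trans
      (sigmaPliftCollapse (fun μ => Walk n P0 μ) P0 partP0)⟩
  | succ k IHk =>
    intro n
    obtain ⟨eg⟩ := IHk (n + 1)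
    refine ⟨((Equiv.sigmaCongrRight fun μ : {μ : ℕ → ℕ // IsPartFun μ} =>
        Equiv.prodCongr (Equiv.refl _) (consEquiv k P0 μ.1)).trans
      ((glueSwap n k).trans
        ((Equiv.sigmaCongrRight fun ρ : {ρ : ℕ → ℕ // IsPartFun ρ} =>
          Equiv.prodCongr (consEquiv n P0 ρ.1).symm (Equiv.refl _)).trans eg))).trans
      (walkCast (by omega))⟩

/-! ### The main theorem -/

/-- `Σ_μ (f̃^μ_n)² = (2n-1)!!` : the number of pairs of oscillating tableaux of
length `n` having the same (arbitrary) final shape equals `(2n-1)!!`. -/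
theorem sum_sq_osc_tableaux (n : ℕ) :
    Nat.card {PQ : (Fin (n + 1) → ℕ → ℕ) × (Fin (n + 1) → ℕ → ℕ) //
        IsOscTab n PQ.1 ∧ IsOscTab n PQ.2 ∧ PQ.1 (Fin.last n) = PQ.2 (Fin.last n)} =
      Nat.doubleFactorial (2 * n - 1) := by
  obtain ⟨eg⟩ := glue n n
  have e2 : (Σ μ : ℕ → ℕ, OscTo n μ × OscTo n μ) ≃
      Σ μ : ℕ → ℕ, Walk n P0 μ × Walk n P0 μ :=
    Equiv.sigmaCongrRight fun μ => Equiv.prodCongr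
      (Classical.choice (oscToEquiv n μ)) (Classical.choice (oscToEquiv n μ))
  have e3 := sigmaSubtypeEquivOfForall (p := fun μ => IsPartFun μ)
    (fun μ => Walk n P0 μ × Walk n P0 μ) (fun μ x => x.1.part_right)
  have hcard := Nat.card_congr (((pairEquiv n).trans (e2.trans (e3.trans eg))).trans
    (walkCast (show n + n = 2 * n by ring)))
  rw [hcard, closed_card]
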